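/- Fix n ≥ 1 and let σ be the unique F₂-derivation of R with σ(x_i) = e_i and σ(e_i) = 0. Let D be the unique F₂-derivation of the polynomial ring R[t] (Polynomial R) satisfying D(C(x_i)) = C(e_i)·t, D(C(e_i)) = 0 and D(t) = 0; explicitly, D(∑_k r_k t^k) = ∑_k σ(r_k) t^(k+1). Then: (a) ker D = { f ∈ R[t] : every coefficient of f lies in ker σ }; (b) range D = { f ∈ R[t] : the constant coefficient of f is 0 and every coefficient of f lies in range σ }. Consequently ker D ⧸ range D decomposes as (ker σ in t-degree 0) plus a copy of ker σ ⧸ range σ in each t-degree k ≥ 1, recovering the E³ = E^∞-page, including its simple t-torsion summand T, of the homological homotopy fixed point spectral sequence computed in Proposition 5.2 of the paper. -/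
import Mathlib


/-!
Let `F₂ := ZMod 2`, fix `n ≥ 1`, and let `R n ≅ P(x₁,…,x_n) ⊗ E(e₁,…,e_n)` model
`H_*(THH(y(n)); F₂)`, with `σ` the `F₂`-derivation with `σ x_i = e_i`, `σ e_i = 0`.

STATEMENT (algebraic content of Proposition 5.2): let `D` be the unique `F₂`-derivation of the
polynomial ring `(R n)[t]` with `D (C x_i) = C e_i * t`, `D (C e_i) = 0` and `D t = 0`.  Then
explicitly `D (∑ r_k t^k) = ∑ σ(r_k) t^(k+1)`, and (a) `ker D` consists of the polynomials all
of whose coefficients lie in `ker σ`; (b) `range D` consists of the polynomials with vanishing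
constant coefficient all of whose coefficients lie in `range σ`.
-/

open MvPolynomial

set_option synthInstance.maxHeartbeats 1000000
set_option maxHeartbeats 2000000

abbrev F₂ : Type := ZMod 2

/-- The ideal generated by the squares of the exterior variables. -/
noncomputable def Isq (n : ℕ) : Ideal (MvPolynomial (Fin n ⊕ Fin n) F₂) :=
  Ideal.span (Set.range fun i : Fin n =>
    (X (Sum.inr i) : MvPolynomial (Fin n ⊕ Fin n) F₂) ^ 2)

/-- `R n ≅ P(x₁,…,x_n) ⊗ E(e₁,…,e_n)`, modeling `H_*(THH(y(n)); F₂)`. -/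
abbrev R (n : ℕ) : Type := MvPolynomial (Fin n ⊕ Fin n) F₂ ⧸ Isq n

/-- The polynomial generator `x_i`, modeling `ξ̄_i`. -/
noncomputable def x (n : ℕ) (i : Fin n) : R n :=
  Ideal.Quotient.mk (Isq n) (X (Sum.inl i))

/-- The exterior generator `e_i`, modeling `σξ̄_i`. -/
noncomputable def e (n : ℕ) (i : Fin n) : R n :=
  Ideal.Quotient.mk (Isq n) (X (Sum.inr i))

/-- Proposition 5.2 (algebraic part): the `d²`-homology of the homological homotopy fixed
point spectral sequence, i.e. kernel and image of `D : f ↦ ∑ σ(f_k) t^(k+1)` on `(R n)[t]`. -/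
theorem d2_homology_homotopy_fixed_points (n : ℕ) (hn : 1 ≤ n)
    (σ : Derivation F₂ (R n) (R n))
    (hσx : ∀ i, σ (x n i) = e n i) (hσe : ∀ i, σ (e n i) = 0)
    (D : Derivation F₂ (Polynomial (R n)) (Polynomial (R n)))
    (hDx : ∀ i, D (Polynomial.C (x n i)) = Polynomial.C (e n i) * Polynomial.X)
    (hDe : ∀ i, D (Polynomial.C (e n i)) = 0)
    (hDt : D Polynomial.X = 0) :
    (∀ (f : Polynomial (R n)) (k : ℕ), (D f).coeff (k + 1) = σ (f.coeff k)) ∧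
    (∀ f : Polynomial (R n), (D f).coeff 0 = 0) ∧
    (∀ f : Polynomial (R n), D f = 0 ↔ ∀ k : ℕ, σ (f.coeff k) = 0) ∧
    (∀ f : Polynomial (R n),
      (∃ g : Polynomial (R n), D g = f) ↔
        f.coeff 0 = 0 ∧ ∀ k : ℕ, ∃ r : R n, σ r = f.coeff k) := by

  -- D on constants: D (C r) = C (σ r) * X
  have hDC : ∀ r : R n, D (Polynomial.C r) = Polynomial.C (σ r) * Polynomial.X := by
    intro r
    obtain ⟨p, rfl⟩ := Ideal.Quotient.mk_surjective (I := Isq n) r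
    induction p using MvPolynomial.induction_on with
    | C c =>
        have h1 : (Ideal.Quotient.mk (Isq n)) (MvPolynomial.C c)
            = algebraMap F₂ (R n) c := rfl
        have h2 : (Polynomial.C (algebraMap F₂ (R n) c) : Polynomial (R n))
            = algebraMap F₂ (Polynomial (R n)) c := rfl
        rw [h1, h2, Derivation.map_algebraMap, Derivation.map_algebraMap,
          map_zero, zero_mul]
    | add p q hp hq =>
        simp only [map_add, add_mul, hp, hq]
    | mul_X p i hp =>
        have h1 : (Ideal.Quotient.mk (Isq n)) (p * X i)
            = (Ideal.Quotient.mk (Isq n)) p *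
              (Ideal.Quotient.mk (Isq n)) (X i) := map_mul _ _ _
        rw [h1, Polynomial.C_mul, Derivation.leibniz, Derivation.leibniz]
        cases i with
        | inl i =>
            rw [show (Ideal.Quotient.mk (Isq n)) (X (Sum.inl i)) = x n i from rfl,
              hDx, hσx, hp]
            simp only [smul_eq_mul, smul_zero, map_add, map_mul, map_zero,
              mul_zero, zero_mul, add_zero, zero_add]
            ring
        | inr i =>
            rw [show (Ideal.Quotient.mk (Isq n)) (X (Sum.inr i)) = e n i from rfl,
              hDe, hσe, hp]
            simp only [smul_eq_mul, smul_zero, map_add, map_mul, map_zero,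
              mul_zero, zero_mul, add_zero, zero_add]
            ring
  have hXpow : ∀ m : ℕ, D (Polynomial.X ^ m) = 0 := by
    intro m
    induction m with
    | zero => simpa using D.map_one_eq_zero
    | succ m ih => rw [pow_succ, Derivation.leibniz, ih, hDt]; simp
  have hDmon : ∀ (m : ℕ) (a : R n),
      D (Polynomial.monomial m a) = Polynomial.monomial (m + 1) (σ a) := by
    intro m a
    rw [← Polynomial.C_mul_X_pow_eq_monomial, ← Polynomial.C_mul_X_pow_eq_monomial,
      Derivation.leibniz, hXpow, hDC]
    simp only [smul_eq_mul, mul_zero, zero_add]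
    ring
  have hA : ∀ (f : Polynomial (R n)) (k : ℕ), (D f).coeff (k + 1) = σ (f.coeff k) := by
    intro f
    induction f using Polynomial.induction_on' with
    | add p q hp hq => intro k; simp [hp k, hq k]
    | monomial m a =>
        intro k
        rw [hDmon, Polynomial.coeff_monomial, Polynomial.coeff_monomial]
        by_cases h : m = k
        · simp [h]
        · simp [h, fun hc : m + 1 = k + 1 => h (Nat.succ_injective hc)]
  have hB : ∀ f : Polynomial (R n), (D f).coeff 0 = 0 := by
    intro f
    induction f using Polynomial.induction_on' with
    | add p q hp hq => simp [hp, hq]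
    | monomial m a => rw [hDmon, Polynomial.coeff_monomial]; simp
  refine ⟨hA, hB, ?_, ?_⟩
  · intro f
    constructor
    · intro h k
      rw [← hA f k, h, Polynomial.coeff_zero]
    · intro h
      ext k
      cases k with
      | zero => simp [hB f]
      | succ k => simp [hA f k, h k]
  · intro f
    constructor
    · rintro ⟨g, rfl⟩
      refine ⟨hB g, fun k => ?_⟩
      cases k with
      | zero => exact ⟨0, by simp [hB g]⟩
      | succ k => exact ⟨g.coeff k, (hA g k).symm⟩
    · rintro ⟨h0, h⟩
      choose r hr using h
      set N := f.natDegree + 1 with hN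
      refine ⟨∑ j ∈ Finset.range N, Polynomial.monomial j (r (j + 1)), ?_⟩
      have hg : ∀ k : ℕ,
          (∑ j ∈ Finset.range N, Polynomial.monomial j (r (j + 1))).coeff k
            = if k < N then r (k + 1) else 0 := by
        intro k
        rw [Polynomial.finset_sum_coeff]
        simp only [Polynomial.coeff_monomial]
        rw [Finset.sum_ite_eq' (Finset.range N) k (fun j => r (j + 1))]
        simp
      ext k
      cases k with
      | zero => rw [hB, h0]
      | succ k =>
          rw [hA, hg k]
          by_cases hk : k < N
          · simp [hk, hr]
          · have : f.natDegree < k + 1 := by omega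
            rw [Polynomial.coeff_eq_zero_of_natDegree_lt this]
            simp [hk]
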